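/- Let A be an annotated automaton over the fuzzy semiring ℱ = (ℕ ∪ {∞}, min, max, ∞, 0) with finite state set, finite alphabet Δ, finite transition set, initial state and final states, and let L = [A] be its annotated language. Fix k ∈ ℕ and let A' be the annotated automaton obtained from A by deleting every transition whose weight is greater than k. Then [A'] = L^k, i.e., for every word w: [A'](w) = [A](w) if [A](w) ≤ k, and [A'](w) = ∞ otherwise. -/

import Mathlib

/-- Transition paths in an annotated automaton over the fuzzy semiring
`ℱ = (ℕ ∪ {∞}, min, max, ∞, 0)`: `FuzzyPath τ q w c q'` means there is a path
of transitions in `τ` from `q` to `q'` spelling the word `w` whose weight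
(fuzzy product, i.e. maximum, of the transition weights) is `c`. -/
inductive FuzzyPath {P Δ : Type*} (τ : Set (P × Δ × ℕ∞ × P)) :
    P → List Δ → ℕ∞ → P → Prop
  | nil (q : P) : FuzzyPath τ q [] 0 q
  | cons {q p q' : P} {r : Δ} {x c : ℕ∞} {w : List Δ} :
      (q, r, x, p) ∈ τ → FuzzyPath τ p w c q' → FuzzyPath τ q (r :: w) (max x c) q'

/-- The annotated language `[A]` of a fuzzy annotated automaton with
transitions `τ`, initial state `q0` and final states `F`: the fuzzy sum
(minimum) of the weights of all accepting paths spelling `w` (`∞` if none). -/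
noncomputable def fuzzyVal {P Δ : Type*} (τ : Set (P × Δ × ℕ∞ × P)) (q0 : P)
    (F : Set P) (w : List Δ) : ℕ∞ :=
  sInf {c | ∃ qf ∈ F, FuzzyPath τ q0 w c qf}

private lemma fuzzyPath_of_restricted {P Δ : Type*} (k : ℕ)
    (τ : Finset (P × Δ × ℕ∞ × P)) {q q' : P} {w : List Δ} {c : ℕ∞}
    (h : FuzzyPath {t | t ∈ τ ∧ t.2.2.1 ≤ (k : ℕ∞)} q w c q') :
    FuzzyPath (↑τ) q w c q' ∧ c ≤ (k : ℕ∞) := by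
  induction h with
  | nil q => exact ⟨FuzzyPath.nil q, zero_le⟩
  | cons ht _ ih =>
    exact ⟨FuzzyPath.cons ht.1 ih.1, max_le ht.2 ih.2⟩

private lemma fuzzyPath_restrict {P Δ : Type*} (k : ℕ)
    (τ : Finset (P × Δ × ℕ∞ × P)) {q q' : P} {w : List Δ} {c : ℕ∞}
    (h : FuzzyPath (↑τ) q w c q') (hc : c ≤ (k : ℕ∞)) :
    FuzzyPath {t | t ∈ τ ∧ t.2.2.1 ≤ (k : ℕ∞)} q w c q' := by
  induction h with
  | nil q => exact FuzzyPath.nil q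
  | @cons q p q' r x c w ht hp ih =>
    exact FuzzyPath.cons ⟨ht, le_trans (le_max_left _ _) hc⟩
      (ih (le_trans (le_max_right _ _) hc))


/-- Let `A` be a fuzzy annotated automaton (finite states,
finite alphabet, finite transition set `τ`, initial state `q0`, final states
`F`) with `L = [A]`, and let `A'` be obtained from `A` by deleting every
transition of weight greater than `k`. Then `[A'] = L^k`: for every word `w`,
`[A'](w) = [A](w)` if `[A](w) ≤ k`, and `[A'](w) = ∞` otherwise. -/
theorem fuzzy_deletion_computes_inner_sphere
    {P Δ : Type*} [Fintype P] [Fintype Δ] (k : ℕ)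
    (τ : Finset (P × Δ × ℕ∞ × P)) (q0 : P) (F : Set P) (w : List Δ) :
    fuzzyVal {t | t ∈ τ ∧ t.2.2.1 ≤ (k : ℕ∞)} q0 F w =
      if fuzzyVal (↑τ) q0 F w ≤ (k : ℕ∞) then fuzzyVal (↑τ) q0 F w else ⊤ := by
  set S : Set ℕ∞ := {c | ∃ qf ∈ F, FuzzyPath (↑τ) q0 w c qf} with hS
  have hset : {c | ∃ qf ∈ F, FuzzyPath {t | t ∈ τ ∧ t.2.2.1 ≤ (k : ℕ∞)} q0 w c qf}
      = S ∩ Set.Iic (k : ℕ∞) := by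
    ext c
    constructor
    · rintro ⟨qf, hqf, hp⟩
      obtain ⟨hp', hc⟩ := fuzzyPath_of_restricted k τ hp
      exact ⟨⟨qf, hqf, hp'⟩, hc⟩
    · rintro ⟨⟨qf, hqf, hp⟩, hc⟩
      exact ⟨qf, hqf, fuzzyPath_restrict k τ hp hc⟩
  unfold fuzzyVal
  rw [hset]
  split_ifs with h
  · -- sInf S ≤ k
    have hne : S.Nonempty := by
      by_contra hcon
      rw [Set.not_nonempty_iff_eq_empty] at hcon
      rw [← hS, hcon, sInf_empty] at h
      simp at h
    have hmem : sInf S ∈ S := csInf_mem hne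
    have hmem' : sInf S ∈ S ∩ Set.Iic (k : ℕ∞) := ⟨hmem, h⟩
    exact le_antisymm (sInf_le hmem') (le_sInf fun c hc => sInf_le hc.1)
  · -- all elements of S exceed k
    have : S ∩ Set.Iic (k : ℕ∞) = ∅ := by
      ext c
      simp only [Set.mem_inter_iff, Set.mem_Iic, Set.mem_empty_iff_false, iff_false]
      rintro ⟨hc, hck⟩
      exact h (le_trans (sInf_le hc) hck)
    rw [this, sInf_empty]
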